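/- For an n × n alternating sign matrix A with s(A) entries equal to −1, the inversion numbers satisfy i(A) + i(A̅) = C(n,2) + s(A), where A̅ is the vertical reflection of A. -/

import Mathlib

open Finset

/-- The nonzero entries alternate in sign, beginning and ending with `1`. -/
def AltList (l : List ℤ) : Prop :=
  l.length % 2 = 1 ∧ ∀ (m : ℕ) (h : m < l.length), l.get ⟨m, h⟩ = if m % 2 = 0 then 1 else -1

/-- Alternating sign matrix: entries in `{-1,0,1}` (forced), and in each row and column
the nonzero entries alternate in sign, beginning and ending with `1`. -/
def IsASM {n : ℕ} (A : Matrix (Fin n) (Fin n) ℤ) : Prop :=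
  (∀ i, AltList ((List.ofFn (fun j => A i j)).filter (fun x => x ≠ 0))) ∧
  (∀ j, AltList ((List.ofFn (fun i => A i j)).filter (fun x => x ≠ 0)))

/-- Vertical reflection: `(reflect A) i j = A i (n+1-j)` (0-indexed as `Fin.rev`). -/
def reflect {n : ℕ} (A : Matrix (Fin n) (Fin n) ℤ) : Matrix (Fin n) (Fin n) ℤ :=
  fun i j => A i j.rev

/-- Number of `-1` entries of `A`. -/
def sMinus {n : ℕ} (A : Matrix (Fin n) (Fin n) ℤ) : ℕ :=
  ((univ ×ˢ univ).filter (fun p : Fin n × Fin n => A p.1 p.2 = -1)).card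

/-- Inversion number `i(A) = ∑_{i<k, ℓ<j} a_{ij} a_{kℓ}`. -/
def invNum {n : ℕ} (A : Matrix (Fin n) (Fin n) ℤ) : ℤ :=
  ∑ i : Fin n, ∑ j : Fin n, ∑ k : Fin n, ∑ l : Fin n,
    if i < k ∧ l < j then A i j * A k l else 0

/- ---------------- auxiliary lemmas ---------------- -/

lemma alt_range_sum (L : ℕ) :
    ∑ m ∈ range L, (if m % 2 = 0 then (1:ℤ) else -1) = ((L % 2 : ℕ) : ℤ) := by
  induction L with
  | zero => simp
  | succ L ih =>
    rw [Finset.sum_range_succ, ih]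
    rcases Nat.mod_two_eq_zero_or_one L with h | h <;> simp [h, Nat.add_mod]

lemma altlist_sum {l : List ℤ} (h : AltList l) : l.sum = 1 := by
  obtain ⟨hodd, hget⟩ := h
  have h1 : l.sum = ∑ i : Fin l.length, l.get i := by
    conv_lhs => rw [← List.ofFn_get l]
    rw [List.sum_ofFn]
  rw [h1]
  have h2 : ∀ i : Fin l.length, l.get i = if (i : ℕ) % 2 = 0 then (1:ℤ) else -1 := by
    intro i
    simpa using hget i i.2
  rw [Finset.sum_congr rfl fun i _ => h2 i]
  rw [Fin.sum_univ_eq_sum_range (fun m => if m % 2 = 0 then (1:ℤ) else -1)]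
  rw [alt_range_sum, hodd]
  norm_num

lemma altlist_mem {l : List ℤ} (h : AltList l) {x : ℤ} (hx : x ∈ l) : x = 1 ∨ x = -1 := by
  obtain ⟨m, rfl⟩ := List.mem_iff_get.mp hx
  have := h.2 m.1 m.2
  simp only [Fin.eta] at this
  rw [this]
  split <;> simp

lemma filter_ne_zero_sum (l : List ℤ) : (l.filter (fun x => x ≠ 0)).sum = l.sum := by
  induction l with
  | nil => simp
  | cons a t ih =>
    rw [List.filter_cons]
    by_cases h : a = 0
    · simpa [h] using ih
    · simp only [h, decide_not]
      simpa [h] using ih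

lemma fn_sum {n : ℕ} {f : Fin n → ℤ}
    (hf : AltList ((List.ofFn f).filter (fun x => x ≠ 0))) : ∑ x, f x = 1 := by
  have := altlist_sum hf
  rwa [filter_ne_zero_sum, List.sum_ofFn] at this

lemma fn_cases {n : ℕ} {f : Fin n → ℤ}
    (hf : AltList ((List.ofFn f).filter (fun x => x ≠ 0))) (x : Fin n) :
    f x = 0 ∨ f x = 1 ∨ f x = -1 := by
  by_cases h : f x = 0
  · exact Or.inl h
  · right
    apply altlist_mem hf
    rw [List.mem_filter]
    refine ⟨?_, by simp [h]⟩
    exact List.mem_ofFn.mpr ⟨x, rfl⟩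

lemma fn_sq {n : ℕ} {f : Fin n → ℤ}
    (hf : AltList ((List.ofFn f).filter (fun x => x ≠ 0))) :
    ∑ x, f x ^ 2 = 2 * (∑ x, if f x = -1 then (1:ℤ) else 0) + 1 := by
  have h1 : ∀ x, f x ^ 2 = (if f x = 1 then (1:ℤ) else 0) + (if f x = -1 then 1 else 0) := by
    intro x
    rcases fn_cases hf x with h | h | h <;> simp [h]
  have h2 : ∀ x, f x = (if f x = 1 then (1:ℤ) else 0) - (if f x = -1 then 1 else 0) := by
    intro x
    rcases fn_cases hf x with h | h | h <;> simp [h]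
  have hs := fn_sum hf
  rw [Finset.sum_congr rfl fun x _ => h2 x, Finset.sum_sub_distrib] at hs
  rw [Finset.sum_congr rfl fun x _ => h1 x, Finset.sum_add_distrib]
  linarith

/-- For a column with sum `1` and sum of squares `2M+1`,
the sum over ordered pairs is `-M`. -/
lemma col_pairs {n : ℕ} (x : Fin n → ℤ) (M : ℤ) (hsum : ∑ i, x i = 1)
    (hsq : ∑ i, x i ^ 2 = 2 * M + 1) :
    ∑ i : Fin n, ∑ k : Fin n, (if i < k then x i * x k else 0) = -M := by
  have expand : (∑ i, x i) * (∑ k, x k) = ∑ i : Fin n, ∑ k : Fin n, x i * x k :=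
    Finset.sum_mul_sum _ _ _ _
  have ptw : ∀ i k : Fin n, x i * x k =
      (if i < k then x i * x k else 0) + (if k < i then x i * x k else 0) +
      (if i = k then x i * x k else 0) := by
    intro i k
    rcases lt_trichotomy i k with h | h | h
    · simp [h, lt_asymm h, h.ne]
    · subst h; simp
    · simp [h, lt_asymm h, (ne_of_lt h).symm]
  have hswap : ∑ i : Fin n, ∑ k : Fin n, (if k < i then x i * x k else 0)
      = ∑ i : Fin n, ∑ k : Fin n, (if i < k then x i * x k else 0) := by
    rw [Finset.sum_comm]
    refine Finset.sum_congr rfl fun i _ => Finset.sum_congr rfl fun k _ => ?_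
    rw [mul_comm]
  have hdiag : ∑ i : Fin n, ∑ k : Fin n, (if i = k then x i * x k else 0)
      = ∑ i, x i ^ 2 := by
    refine Finset.sum_congr rfl fun i _ => ?_
    rw [Finset.sum_ite_eq univ i (fun k => x i * x k)]
    simp [sq]
  rw [Finset.sum_congr rfl fun i (_ : i ∈ univ) =>
    Finset.sum_congr rfl fun k (_ : k ∈ univ) => ptw i k] at expand
  simp only [Finset.sum_add_distrib] at expand
  rw [hswap, hdiag, hsum, hsq] at expand
  linarith

lemma sum_lt_pairs (n : ℕ) :
    ∑ i : Fin n, ∑ k : Fin n, (if i < k then (1:ℤ) else 0) = (n.choose 2 : ℤ) := by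
  have h1 : ∀ k : Fin n, ∑ i : Fin n, (if i < k then (1:ℤ) else 0) = ((k : ℕ) : ℤ) := by
    intro k
    rw [Finset.sum_boole]
    norm_num
    rw [show univ.filter (· < k) = Iio k by ext x; simp, Fin.card_Iio]
  rw [Finset.sum_comm]
  rw [Finset.sum_congr rfl fun k _ => h1 k]
  have h2 : ∑ k : Fin n, ((k : ℕ) : ℤ) = ((∑ m ∈ range n, m : ℕ) : ℤ) := by
    push_cast
    exact Fin.sum_univ_eq_sum_range (fun m => (m : ℤ)) n
  rw [h2]
  congr 1
  have := Finset.sum_range_id_mul_two n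
  rw [Nat.choose_two_right]
  omega

/-- `i(A) + i(A̅) = C(n,2) + s(A)`. -/
theorem stmt_6 {n : ℕ} (A : Matrix (Fin n) (Fin n) ℤ) (hA : IsASM A) :
    invNum A + invNum (reflect A) = (n.choose 2 : ℤ) + (sMinus A : ℤ) := by
  obtain ⟨hrow, hcol⟩ := hA
  have rowsum : ∀ i, ∑ j, A i j = 1 := fun i => fn_sum (hrow i)
  have colsum : ∀ j, ∑ i, A i j = 1 := fun j => fn_sum (hcol j)
  -- rewrite the reflected inversion number
  have hrefl : invNum (reflect A) = ∑ i : Fin n, ∑ j : Fin n, ∑ k : Fin n, ∑ l : Fin n,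
      if i < k ∧ j < l then A i j * A k l else 0 := by
    unfold invNum reflect
    refine Finset.sum_congr rfl fun i _ => ?_
    rw [← Equiv.sum_comp (Fin.revPerm)
      (fun j => ∑ k : Fin n, ∑ l : Fin n, if i < k ∧ l < j then A i j.rev * A k l.rev else 0)]
    refine Finset.sum_congr rfl fun j _ => Finset.sum_congr rfl fun k _ => ?_
    rw [← Equiv.sum_comp (Fin.revPerm)
      (fun l => if i < k ∧ l < Fin.revPerm j then A i (Fin.revPerm j).rev * A k l.rev else 0)]
    refine Finset.sum_congr rfl fun l _ => ?_
    simp [Fin.rev_lt_rev]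
  rw [hrefl]
  unfold invNum
  simp only [← Finset.sum_add_distrib]
  have ptw : ∀ (i j k l : Fin n),
      ((if i < k ∧ l < j then A i j * A k l else 0) +
        (if i < k ∧ j < l then A i j * A k l else 0)) =
      (if i < k then A i j * A k l else 0) -
        (if i < k ∧ j = l then A i j * A k l else 0) := by
    intro i j k l
    by_cases hik : i < k
    · rcases lt_trichotomy j l with h | h | h
      · simp [hik, h, lt_asymm h, h.ne]
      · subst h; simp [hik]
      · simp [hik, h, lt_asymm h, (ne_of_lt h).symm]
    · simp [hik]
  rw [Finset.sum_congr rfl fun i _ => Finset.sum_congr rfl fun j _ =>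
    Finset.sum_congr rfl fun k _ => Finset.sum_congr rfl fun l _ => ptw i j k l]
  simp only [Finset.sum_sub_distrib]
  have T1 : ∑ i : Fin n, ∑ j : Fin n, ∑ k : Fin n, ∑ l : Fin n,
      (if i < k then A i j * A k l else 0) = (n.choose 2 : ℤ) := by
    have step : ∀ i j k : Fin n, ∑ l : Fin n, (if i < k then A i j * A k l else 0)
        = if i < k then A i j else 0 := by
      intro i j k
      by_cases hik : i < k
      · simp only [hik, if_true]
        rw [← Finset.mul_sum, rowsum k, mul_one]
      · simp [hik]
    simp only [step]
    rw [Finset.sum_congr rfl fun i (_ : i ∈ (univ : Finset (Fin n))) =>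
      Finset.sum_comm (s := univ) (t := univ) (f := fun j k => if i < k then A i j else 0)]
    have step2 : ∀ i k : Fin n, ∑ j : Fin n, (if i < k then A i j else 0)
        = if i < k then (1:ℤ) else 0 := by
      intro i k
      by_cases hik : i < k <;> simp [hik, rowsum i]
    simp only [step2]
    exact sum_lt_pairs n
  have T2 : ∑ i : Fin n, ∑ j : Fin n, ∑ k : Fin n, ∑ l : Fin n,
      (if i < k ∧ j = l then A i j * A k l else 0) = -(sMinus A : ℤ) := by
    have stepl : ∀ i j k : Fin n, ∑ l : Fin n, (if i < k ∧ j = l then A i j * A k l else 0)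
        = if i < k then A i j * A k j else 0 := by
      intro i j k
      by_cases hik : i < k
      · simp only [hik, true_and, if_true]
        rw [Finset.sum_ite_eq univ j (fun l => A i j * A k l)]
        simp
      · simp [hik]
    simp only [stepl]
    rw [Finset.sum_comm]
    have colM : ∀ j : Fin n, ∑ i : Fin n, ∑ k : Fin n, (if i < k then A i j * A k j else 0)
        = -(∑ i : Fin n, if A i j = -1 then (1:ℤ) else 0) :=
      fun j => col_pairs (fun i => A i j) _ (colsum j) (fn_sq (hcol j))
    rw [Finset.sum_congr rfl fun j _ => colM j]
    have hsm : (sMinus A : ℤ)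
        = ∑ j : Fin n, ∑ i : Fin n, (if A i j = -1 then (1:ℤ) else 0) := by
      unfold sMinus
      rw [Finset.card_filter]
      push_cast
      rw [Finset.sum_product]
      rw [Finset.sum_comm]
    rw [hsm, ← Finset.sum_neg_distrib]
  rw [T1, T2]
  ring
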